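/- If r is positive and increasing on an interval, w(x) = √(r(x)), and h satisfies h' = 1 + r h², then the map t₁(x) = x − (arctan(w(x)h(x)) + π)/w(x) has derivative t₁'(x) = (w'(x)/w(x)²)·s(w(x)h(x)) with s(t) = arctan(t) + π − t/(1+t²), and hence t₁ is increasing. -/

import Mathlib

open Real Set

lemma s_pos (t : ℝ) : 0 < Real.arctan t + Real.pi - t / (1 + t ^ 2) := by
  have h0 : (0:ℝ) < 1 + t ^ 2 := by positivity
  have h1 : t / (1 + t ^ 2) ≤ 1 / 2 := by
    rw [div_le_div_iff₀ h0 (by norm_num)]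
    nlinarith [sq_nonneg (t - 1)]
  have h2 := Real.neg_pi_div_two_lt_arctan t
  nlinarith [Real.pi_gt_three]

lemma main_deriv (r h : ℝ → ℝ) (x : ℝ)
    (hr : DifferentiableAt ℝ r x) (hrx : 0 < r x)
    (hh : HasDerivAt h (1 + r x * h x ^ 2) x) :
    HasDerivAt (fun y => y - (Real.arctan (Real.sqrt (r y) * h y) + Real.pi) / Real.sqrt (r y))
      ((deriv r x / (2 * Real.sqrt (r x)) / (Real.sqrt (r x)) ^ 2) *
        (Real.arctan (Real.sqrt (r x) * h x) + Real.pi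
          - (Real.sqrt (r x) * h x) / (1 + (Real.sqrt (r x) * h x) ^ 2))) x := by
  have hWx : 0 < Real.sqrt (r x) := Real.sqrt_pos.2 hrx
  have hW : HasDerivAt (fun y => Real.sqrt (r y)) (deriv r x / (2 * Real.sqrt (r x))) x :=
    hr.hasDerivAt.sqrt hrx.ne'
  have hu : HasDerivAt (fun y => Real.sqrt (r y) * h y)
      (deriv r x / (2 * Real.sqrt (r x)) * h x + Real.sqrt (r x) * (1 + r x * h x ^ 2)) x :=
    hW.mul hh
  have harc := hu.arctan
  have hF := (harc.add_const Real.pi).div hW hWx.ne'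
  have hmain := (hasDerivAt_id x).sub hF
  refine hmain.congr_deriv ?_
  symm
  have hsq : Real.sqrt (r x) ^ 2 = r x := Real.sq_sqrt hrx.le
  have hd : 1 + (Real.sqrt (r x) * h x) ^ 2 = 1 + r x * h x ^ 2 := by
    rw [mul_pow, hsq]
  have hdpos : (0:ℝ) < 1 + r x * h x ^ 2 := by positivity
  set W := Real.sqrt (r x) with hWdef
  rw [hd]
  have hr2 : r x = W ^ 2 := hsq.symm
  rw [hr2]
  have hWne : W ≠ 0 := hWx.ne'
  have hdpos2 : (0:ℝ) < 1 + W ^ 2 * h x ^ 2 := by positivity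
  field_simp
  ring

lemma deriv_nonneg_of_mono {r : ℝ → ℝ} {a b x : ℝ} (hx : x ∈ Set.Ioo a b)
    (hd : DifferentiableAt ℝ r x) (hm : StrictMonoOn r (Set.Ioo a b)) : 0 ≤ deriv r x := by
  have ht := hd.hasDerivAt
  rw [hasDerivAt_iff_tendsto_slope] at ht
  refine ge_of_tendsto ht ?_
  have hmem : Set.Ioo a b \ {x} ∈ nhdsWithin x {x}ᶜ :=
    Filter.inter_mem (nhdsWithin_le_nhds (isOpen_Ioo.mem_nhds hx)) self_mem_nhdsWithin
  filter_upwards [hmem] with y hy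
  obtain ⟨hy1, hy2⟩ := hy
  have hne : y ≠ x := hy2
  rcases lt_or_gt_of_ne hne with hlt | hgt
  · have : r y ≤ r x := (hm hy1 hx hlt).le
    simp only [slope_def_field, div_nonneg_iff]
    right
    constructor <;> [skip; skip] <;> simp only [sub_nonpos] <;> linarith
  · have : r x ≤ r y := (hm hx hy1 hgt).le
    simp only [slope_def_field]
    apply div_nonneg <;> linarith

theorem t1_derivative_and_increasing (a b : ℝ) (r h : ℝ → ℝ)
    (hr : ∀ x ∈ Set.Ioo a b, DifferentiableAt ℝ r x)
    (hrc : ContinuousOn (deriv r) (Set.Ioo a b))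
    (hrpos : ∀ x ∈ Set.Ioo a b, 0 < r x)
    (hrmono : StrictMonoOn r (Set.Ioo a b))
    (hh : ∀ x ∈ Set.Ioo a b, HasDerivAt h (1 + r x * h x ^ 2) x) :
    (∀ x ∈ Set.Ioo a b,
      deriv (fun y => y - (Real.arctan (Real.sqrt (r y) * h y) + Real.pi) / Real.sqrt (r y)) x
        = (deriv (fun y => Real.sqrt (r y)) x / (Real.sqrt (r x)) ^ 2) *
            (Real.arctan (Real.sqrt (r x) * h x) + Real.pi
              - (Real.sqrt (r x) * h x) / (1 + (Real.sqrt (r x) * h x) ^ 2)))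
    ∧ StrictMonoOn
        (fun y => y - (Real.arctan (Real.sqrt (r y) * h y) + Real.pi) / Real.sqrt (r y))
        (Set.Ioo a b) := by
  set t₁ := fun y => y - (Real.arctan (Real.sqrt (r y) * h y) + Real.pi) / Real.sqrt (r y) with ht₁
  have hmain : ∀ x ∈ Set.Ioo a b, HasDerivAt t₁
      ((deriv r x / (2 * Real.sqrt (r x)) / (Real.sqrt (r x)) ^ 2) *
        (Real.arctan (Real.sqrt (r x) * h x) + Real.pi
          - (Real.sqrt (r x) * h x) / (1 + (Real.sqrt (r x) * h x) ^ 2))) x :=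
    fun x hx => main_deriv r h x (hr x hx) (hrpos x hx) (hh x hx)
  have hWd : ∀ x ∈ Set.Ioo a b,
      deriv (fun y => Real.sqrt (r y)) x = deriv r x / (2 * Real.sqrt (r x)) :=
    fun x hx => ((hr x hx).hasDerivAt.sqrt (hrpos x hx).ne').deriv
  have hderiv : ∀ x ∈ Set.Ioo a b, deriv t₁ x
      = (deriv r x / (2 * Real.sqrt (r x)) / (Real.sqrt (r x)) ^ 2) *
        (Real.arctan (Real.sqrt (r x) * h x) + Real.pi
          - (Real.sqrt (r x) * h x) / (1 + (Real.sqrt (r x) * h x) ^ 2)) :=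
    fun x hx => (hmain x hx).deriv
  have hdnn : ∀ x ∈ Set.Ioo a b, 0 ≤ deriv t₁ x := by
    intro x hx
    rw [hderiv x hx]
    have h1 : 0 ≤ deriv r x := deriv_nonneg_of_mono hx (hr x hx) hrmono
    have h2 : 0 < Real.sqrt (r x) := Real.sqrt_pos.2 (hrpos x hx)
    have h3 := s_pos (Real.sqrt (r x) * h x)
    positivity
  have hmono : MonotoneOn t₁ (Set.Ioo a b) := by
    apply monotoneOn_of_deriv_nonneg (convex_Ioo a b)
    · exact fun x hx => ((hmain x hx).differentiableAt).continuousAt.continuousWithinAt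
    · rw [interior_Ioo]
      exact fun x hx => ((hmain x hx).differentiableAt).differentiableWithinAt
    · rw [interior_Ioo]; exact hdnn
  constructor
  · exact fun x hx => by rw [hderiv x hx, hWd x hx]
  · intro x hx y hy hxy
    rcases lt_or_eq_of_le (hmono hx hy hxy.le) with hlt | heq
    · exact hlt
    exfalso
    -- t₁ is constant on [x, y]; derive deriv r = 0 on Ioo x y and contradict strict mono via MVT
    have hconst : ∀ z ∈ Set.Icc x y, t₁ z = t₁ x := by
      intro z hz
      have hzab : z ∈ Set.Ioo a b := ⟨lt_of_lt_of_le hx.1 hz.1, lt_of_le_of_lt hz.2 hy.2⟩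
      have h1 : t₁ x ≤ t₁ z := hmono hx hzab hz.1
      have h2 : t₁ z ≤ t₁ y := hmono hzab hy hz.2
      rw [← heq] at h2
      linarith
    have hd0 : ∀ z ∈ Set.Ioo x y, deriv r z = 0 := by
      intro z hz
      have hzab : z ∈ Set.Ioo a b := ⟨lt_trans hx.1 hz.1, lt_trans hz.2 hy.2⟩
      have hev : t₁ =ᶠ[nhds z] fun _ => t₁ x := by
        filter_upwards [isOpen_Ioo.mem_nhds hz] with w hw
        exact hconst w ⟨hw.1.le, hw.2.le⟩
      have hdz : deriv t₁ z = 0 := by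
        rw [Filter.EventuallyEq.deriv_eq hev, deriv_const]
      rw [hderiv z hzab] at hdz
      have h2 : 0 < Real.sqrt (r z) := Real.sqrt_pos.2 (hrpos z hzab)
      have h3 := s_pos (Real.sqrt (r z) * h z)
      have h4 : deriv r z / (2 * Real.sqrt (r z)) / Real.sqrt (r z) ^ 2 = 0 := by
        rcases mul_eq_zero.1 hdz with H | H
        · exact H
        · linarith
      field_simp at h4
      simpa using h4
    -- MVT on a subinterval
    set u := x + (y - x) / 3 with hu
    set v := y - (y - x) / 3 with hv
    have huv : u < v := by simp only [hu, hv]; linarith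
    have huab : u ∈ Set.Ioo a b := ⟨by simp only [hu]; linarith [hx.1], by simp only [hu]; linarith [hy.2]⟩
    have hvab : v ∈ Set.Ioo a b := ⟨by simp only [hv]; linarith [hx.1], by simp only [hv]; linarith [hy.2]⟩
    have hsub : Set.Icc u v ⊆ Set.Ioo x y := fun w hw =>
      ⟨by have := hw.1; simp only [hu] at this ⊢; linarith,
       by have := hw.2; simp only [hv] at this ⊢; linarith⟩
    obtain ⟨c, hc, hceq⟩ := exists_hasDerivAt_eq_slope r (deriv r) huv
      (fun w hw => ((hr w ⟨lt_trans hx.1 (hsub hw).1, lt_trans (hsub hw).2 hy.2⟩).continuousAt).continuousWithinAt)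
      (fun w hw => (hr w ⟨lt_trans hx.1 (hsub (Set.Ioo_subset_Icc_self hw)).1,
        lt_trans (hsub (Set.Ioo_subset_Icc_self hw)).2 hy.2⟩).hasDerivAt)
    have hc0 : deriv r c = 0 := hd0 c (hsub (Set.Ioo_subset_Icc_self hc))
    rw [hc0] at hceq
    have : r u < r v := hrmono huab hvab huv
    have : r v - r u = 0 := by
      rcases div_eq_zero_iff.mp hceq.symm with H | H
      · exact H
      · linarith
    linarith
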